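/- If z is drawn from the standard normal distribution N(0,1), then the expectation E_z[g²(u; δ, z)], where g²(u; δ, z) = |z|/(2δ) if |u| < δ|z| and 0 otherwise, equals (1/(δ√(2π)))·exp(−u²/(2δ²)). -/

import Mathlib

open MeasureTheory ProbabilityTheory Real Set Filter

lemma key_Ioi (a : ℝ) : ∫ t in Set.Ioi a, t * rexp (-t ^ 2 / 2) = rexp (-a ^ 2 / 2) := by
  have hderiv : ∀ x ∈ Set.Ici a, HasDerivAt (fun t : ℝ => -rexp (-t ^ 2 / 2))
      (x * rexp (-x ^ 2 / 2)) x := by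
    intro x _
    have h1 : HasDerivAt (fun t : ℝ => -t ^ 2 / 2) (-x) x := by
      have := ((hasDerivAt_pow 2 x).neg.div_const 2)
      refine this.congr_deriv ?_
      simp
      ring
    have h2 := (h1.exp).neg
    refine h2.congr_deriv ?_
    ring
  have hint : IntegrableOn (fun x : ℝ => x * rexp (-x ^ 2 / 2)) (Set.Ioi a) := by
    have h := integrable_mul_exp_neg_mul_sq (b := 1/2) (by norm_num)
    have heq : (fun x : ℝ => x * rexp (-x ^ 2 / 2)) = fun x : ℝ => x * rexp (-(1/2) * x ^ 2) := by
      funext x; congr 1; ring_nf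
    rw [heq]
    exact h.integrableOn
  have htend : Tendsto (fun t : ℝ => -rexp (-t ^ 2 / 2)) atTop (nhds 0) := by
    rw [show (0 : ℝ) = -0 by norm_num]
    apply Tendsto.neg
    have h1 : Tendsto (fun t : ℝ => t ^ 2 / 2) atTop atTop :=
      (tendsto_pow_atTop (by norm_num)).atTop_div_const (by norm_num)
    have := (tendsto_exp_neg_atTop_nhds_zero).comp h1
    simpa [Function.comp_def, neg_div] using this
  have := integral_Ioi_of_hasDerivAt_of_tendsto' hderiv hint htend
  rw [this]
  ring

theorem expected_zeroth_order_estimator_gaussian (u δ : ℝ) (hδ : 0 < δ) :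
    ∫ z, (if |u| < δ * |z| then |z| / (2 * δ) else 0) ∂(gaussianReal 0 1) =
      (1 / (δ * Real.sqrt (2 * π))) * Real.exp (-u ^ 2 / (2 * δ ^ 2)) := by
  set a : ℝ := |u| / δ with ha
  have ha0 : 0 ≤ a := div_nonneg (abs_nonneg u) hδ.le
  have hsqrt : (0 : ℝ) < Real.sqrt (2 * π) := Real.sqrt_pos.mpr (by positivity)
  -- unfold gaussianReal as withDensity
  rw [gaussianReal_of_var_ne_zero 0 one_ne_zero]
  have hmeas : Measurable fun x => (gaussianPDFReal 0 1 x).toNNReal :=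
    (measurable_gaussianPDFReal 0 1).real_toNNReal
  have hpdf : gaussianPDF 0 1 = fun x => ((gaussianPDFReal 0 1 x).toNNReal : ENNReal) := rfl
  rw [hpdf, integral_withDensity_eq_integral_smul hmeas]
  have hval : ∀ x : ℝ, ((gaussianPDFReal 0 1 x).toNNReal : ℝ) = (Real.sqrt (2 * π))⁻¹ *
      rexp (-x ^ 2 / 2) := by
    intro x
    rw [Real.coe_toNNReal _ (gaussianPDFReal_nonneg 0 1 x)]
    simp [gaussianPDFReal]
  have hform : (fun x : ℝ => (gaussianPDFReal 0 1 x).toNNReal •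
      (if |u| < δ * |x| then |x| / (2 * δ) else 0)) =
      fun x => Set.indicator (Set.Ioi a) (fun t => ((Real.sqrt (2 * π))⁻¹ / (2 * δ)) *
        (t * rexp (-t ^ 2 / 2))) |x| := by
    funext x
    rw [NNReal.smul_def, smul_eq_mul, hval x]
    have hcond : (|u| < δ * |x|) ↔ |x| ∈ Set.Ioi a := by
      simp only [Set.mem_Ioi, ha, div_lt_iff₀ hδ]
      constructor <;> intro h <;> linarith [mul_comm δ |x|]
    rw [show rexp (-x ^ 2 / 2) = rexp (-|x| ^ 2 / 2) by rw [sq_abs]]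
    by_cases h : |u| < δ * |x|
    · rw [if_pos h, Set.indicator_of_mem (hcond.mp h)]
      ring
    · rw [if_neg h, Set.indicator_of_notMem (fun hm => h (hcond.mpr hm))]
      ring
  rw [hform, integral_comp_abs, setIntegral_indicator measurableSet_Ioi,
    show Set.Ioi (0 : ℝ) ∩ Set.Ioi a = Set.Ioi a by rw [Set.Ioi_inter_Ioi, max_eq_right ha0],
    integral_const_mul, key_Ioi]
  have hexp : rexp (-a ^ 2 / 2) = rexp (-u ^ 2 / (2 * δ ^ 2)) := by
    congr 1
    rw [ha, div_pow, sq_abs]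
    ring
  rw [hexp]
  field_simp
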